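/- Let $\omega\subset\eta$ be integer partitions with $|\omega|=m$, $|\eta|=n$, $\eta$ of length $d$ and $\omega$ of length $k$. Then $\frac{\dim(\omega,\eta)}{\dim(\eta)} = \sum_{1\le i_1<\cdots<i_k\le d}\ \sum_{(v_{(1)},\dots,v_{(k)})=\omega} \frac{(\eta_{i_1})_{[v_1]}\cdots(\eta_{i_k})_{[v_k]}}{n_{[m]}}$, where $a_{[j]}=a(a-1)\cdots(a-j+1)$ denotes the falling factorial and the inner sum is over tuples $(v_1,\dots,v_k)$ whose decreasing rearrangement is $\omega$. -/

import Mathlib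

open Finset

/-- Kingman-graph edge weight `χ(ω,η)`: for a covering pair, the increased part size is
the unique element of `η - ω`, and the weight is the number of parts of `η` of that size. -/
def chiW (ω η : Multiset ℕ) : ℕ := η.count ((η - ω).sum)

/-- The partitions covering `ω` (increase one part by `1`, or add a new part `1`). -/
def upSet (ω : Multiset ℕ) : Finset (Multiset ℕ) :=
  insert (1 ::ₘ ω) (ω.toFinset.image (fun k => (k + 1) ::ₘ ω.erase k))

/-- The partitions covered by `η` (decrease one part by `1`, deleting it if it was `1`). -/
def downSet (η : Multiset ℕ) : Finset (Multiset ℕ) :=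
  η.toFinset.image (fun k => if k = 1 then η.erase 1 else (k - 1) ::ₘ η.erase k)

/-- Total path weight from `ω` up to `η` in the Kingman graph, with fuel. -/
def kdimAux : ℕ → Multiset ℕ → Multiset ℕ → ℕ
  | 0, ω, η => if ω = η then 1 else 0
  | m + 1, ω, η => ∑ lam ∈ downSet η, chiW lam η * kdimAux m ω lam

/-- `dim(ω, η)`: total path weight from `ω` to `η`. -/
def kdim (ω η : Multiset ℕ) : ℕ := kdimAux (η.sum - ω.sum) ω η

/-- Multinomial coefficient `(|η| choose η)` as a rational. -/
def multQ (η : Multiset ℕ) : ℚ := (Nat.factorial η.sum : ℚ) / ((η.map Nat.factorial).prod : ℕ)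

/-- Multinomial coefficient as a real. -/
noncomputable def multR (η : Multiset ℕ) : ℝ := (Nat.factorial η.sum : ℝ) / ((η.map Nat.factorial).prod : ℕ)

/-- Young-diagram containment `ω ⊂ η` (componentwise on ranked parts, via conjugates). -/
def ydLE (ω η : Multiset ℕ) : Prop :=
  ∀ k, Multiset.card (ω.filter (fun a => k ≤ a)) ≤ Multiset.card (η.filter (fun a => k ≤ a))

/-- Rising factorial `a (a+1) ⋯ (a+k-1)`. -/
noncomputable def riseF (a : ℝ) (k : ℕ) : ℝ := ∏ i ∈ Finset.range k, (a + i)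

/-- Ewens–Pitman moment `m(η) = 𝔼_{α,θ}[ ̃P_η]` (the `θ`-factor cancelled form of
`∏_{l=0}^{d-1}(θ+lα)/(θ)_{(n)} ∏ (1-α)_{(η_i-1)}`). -/
noncomputable def EPM (α θ : ℝ) (η : Multiset ℕ) : ℝ :=
  (∏ l ∈ Finset.Ico 1 (Multiset.card η), (θ + l * α)) /
      (∏ i ∈ Finset.Ico 1 η.sum, (θ + i)) *
    (η.map (fun p => riseF (1 - α) (p - 1))).prod

/-- `a₁(η)! ⋯ a_n(η)!`. -/
def aprod (η : Multiset ℕ) : ℕ := ∏ k ∈ Finset.Icc 1 η.sum, Nat.factorial (η.count k)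

/-- Chinese-restaurant edge weight `χ_B(ω,η)`. -/
def chiB (ω η : Multiset ℕ) : ℕ :=
  if (η - ω).sum = 1 then 1 else ω.count ((η - ω).sum - 1)

/-- Augmented monomial symmetric function as a real-valued function. -/
noncomputable def tildePR (N : ℕ) (η : List ℕ) (x : Fin N → ℝ) : ℝ :=
  ∑ f ∈ (Finset.univ : Finset (Fin η.length → Fin N)).filter Function.Injective,
    ∏ j, x (f j) ^ η.get j

/-- Monomial symmetric function: sum over distinct rearrangements of `η`. -/
noncomputable def monoP (N : ℕ) (η : Multiset ℕ) (x : Fin N → ℝ) : ℝ :=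
  ∑ v ∈ (Finset.univ : Finset (Fin N → Fin (η.sum + 1))).filter
      (fun v => Multiset.filter (fun a => 0 < a)
        (Multiset.map (fun i => ((v i : ℕ))) (Finset.univ : Finset (Fin N)).val) = η),
    ∏ i, x i ^ ((v i : ℕ))

/-- `\vec P_η(x) = (n choose η) P_η(x)`. -/
noncomputable def vecP (N : ℕ) (η : Multiset ℕ) (x : Fin N → ℝ) : ℝ :=
  (Nat.factorial η.sum : ℝ) / ((η.map Nat.factorial).prod : ℕ) * monoP N η x

/-- Augmented monomial symmetric polynomial. -/
noncomputable def tildePoly (N : ℕ) (η : List ℕ) : MvPolynomial (Fin N) ℝ :=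
  ∑ f ∈ (Finset.univ : Finset (Fin η.length → Fin N)).filter Function.Injective,
    ∏ j, (MvPolynomial.X (f j)) ^ η.get j

/-- The operator `𝓛_{α,θ}` on polynomials. -/
noncomputable def Lop (α θ : ℝ) {N : ℕ} (p : MvPolynomial (Fin N) ℝ) :
    MvPolynomial (Fin N) ℝ :=
  MvPolynomial.C (1 / 2 : ℝ) *
      (∑ i, ∑ j, MvPolynomial.X i * ((if i = j then 1 else 0) - MvPolynomial.X j) *
        MvPolynomial.pderiv i (MvPolynomial.pderiv j p)) -
    MvPolynomial.C (1 / 2 : ℝ) *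
      (∑ i, (MvPolynomial.C θ * MvPolynomial.X i + MvPolynomial.C α) * MvPolynomial.pderiv i p)

/-- The ideal generated by `∑ xᵢ - 1` (identities on the simplex). -/
noncomputable def simplexIdeal (N : ℕ) : Ideal (MvPolynomial (Fin N) ℝ) :=
  Ideal.span {(∑ i, MvPolynomial.X i) - 1}

namespace KGH



/-- The basic summand object. -/
def FF {k d : ℕ} (w : Fin k → ℕ) (e : Fin d → ℕ) : ℚ :=
  ∑ f ∈ (univ : Finset (Fin k → Fin d)).filter Function.Injective,
    ∏ l, ((e (f l)).descFactorial (w l) : ℚ)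

/-- Number of symmetries of `w`. -/
def AW {k : ℕ} (w : Fin k → ℕ) : ℕ :=
  ((univ : Finset (Fin k → Fin k)).filter
    (fun σ => Function.Injective σ ∧ w ∘ σ = w)).card

lemma AW_pos {k : ℕ} (w : Fin k → ℕ) : 0 < AW w := by
  apply Finset.card_pos.2
  exact ⟨id, by simp [Function.injective_id]⟩

lemma descQ_step (x v : ℕ) :
    (x : ℚ) * ((x - 1).descFactorial v) = ((x : ℚ) - v) * x.descFactorial v := by
  rcases x with _ | y
  · rcases v with _ | v <;> simp
  · rcases Nat.lt_or_ge y v with h | h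
    · have hL : (y + 1 - 1).descFactorial v = 0 := by
        simp only [Nat.add_sub_cancel]; exact Nat.descFactorial_of_lt h
      rw [hL]
      rcases Nat.lt_or_ge (y+1) v with h2 | h2
      · rw [Nat.descFactorial_of_lt h2]; simp
      · have hv : y + 1 = v := by omega
        subst hv; push_cast; ring
    · rcases v with _ | v
      · simp
      · have h1 : (y + 1).descFactorial (v + 1) = (y + 1) * y.descFactorial v :=
          Nat.succ_descFactorial_succ y v
        have h2 : (y + 1).descFactorial (v + 1) = (y + 1 - v) * (y+1).descFactorial v := by
          rw [Nat.descFactorial_succ]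
        have h3 : ((y + 1 : ℕ) : ℚ) - (v + 1 : ℕ) = ((y - v : ℕ) : ℚ) := by
          push_cast [Nat.cast_sub (by omega : v ≤ y)]; ring
        simp only [Nat.add_sub_cancel]
        rw [h3]
        rw [show ((y+1 : ℕ) : ℚ) * (y.descFactorial (v+1) : ℚ) = (((y+1) * y.descFactorial (v+1) : ℕ) : ℚ) by push_cast; ring]
        rw [show ((y - v : ℕ) : ℚ) * ((y+1).descFactorial (v+1) : ℚ) = (((y - v) * ((y+1).descFactorial (v+1)) : ℕ) : ℚ) by push_cast; ring]
        congr 1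
        rw [Nat.descFactorial_succ, h1]
        have hyv : y + 1 - (v + 1) = y - v := by omega
        ring
lemma map_univ_ofFn {α : Type*} {n : ℕ} (g : Fin n → α) :
    Multiset.map g (univ : Finset (Fin n)).val = ↑(List.ofFn g) := by
  simp [List.ofFn_eq_map]

lemma map_univ_get (L : List ℕ) :
    Multiset.map L.get (univ : Finset (Fin L.length)).val = ↑L := by
  rw [map_univ_ofFn, List.ofFn_get]

lemma sum_univ_get (L : List ℕ) : ∑ p, L.get p = L.sum := by
  have := congrArg Multiset.sum (map_univ_get L)
  simpa [Finset.sum] using this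

lemma prod_univ_get_factorial (L : List ℕ) :
    ((Multiset.map Nat.factorial (↑L : Multiset ℕ)).prod : ℚ)
      = ∏ p, ((L.get p).factorial : ℚ) := by
  rw [← map_univ_get L, Multiset.map_map]
  rw [show ∏ p, ((L.get p).factorial : ℚ) = ∏ p, ((Nat.factorial ∘ L.get) p : ℚ) from rfl]
  rw [← Nat.cast_prod]
  congr 1


lemma univ_val_option {α : Type*} [Fintype α] [DecidableEq α] :
    (univ : Finset (Option α)).val = none ::ₘ Multiset.map some (univ : Finset α).val := by
  have h1 : (univ : Finset (Option α)) = insertNone univ := by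
    ext x; simp
  rw [h1]
  rfl

lemma univ_val_succAbove {n : ℕ} (j : Fin (n+1)) :
    (univ : Finset (Fin (n+1))).val
      = j ::ₘ Multiset.map j.succAbove (univ : Finset (Fin n)).val := by
  have h := Multiset.map_univ_val_equiv (finSuccEquiv' j).symm
  rw [← h, univ_val_option, Multiset.map_cons, Multiset.map_map]
  have h2 : (finSuccEquiv' j).symm none = j := finSuccEquiv'_symm_none j
  have h3 : Multiset.map ((finSuccEquiv' j).symm ∘ some) (univ : Finset (Fin n)).val
      = Multiset.map j.succAbove (univ : Finset (Fin n)).val := by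
    apply Multiset.map_congr rfl
    intro x _
    exact finSuccEquiv'_symm_some j x
  rw [h2, h3]

lemma perm_exists : ∀ (k : ℕ) {d : ℕ} (u : Fin k → ℕ) (v : Fin d → ℕ),
    Multiset.map u (univ : Finset (Fin k)).val = Multiset.map v (univ : Finset (Fin d)).val →
    ∃ e : Fin k ≃ Fin d, ∀ x, v (e x) = u x := by
  intro k
  induction k with
  | zero =>
    intro d u v h
    have hd : d = 0 := by
      have := congrArg Multiset.card h
      simpa using this.symm
    subst hd
    exact ⟨Equiv.refl _, fun x => x.elim0⟩
  | succ k ih =>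
    intro d u v h
    -- u 0 appears in map v univ
    have hmem : u 0 ∈ Multiset.map v (univ : Finset (Fin d)).val := by
      rw [← h]; exact Multiset.mem_map_of_mem u (mem_univ_val 0)
    obtain ⟨j, _, hj⟩ := Multiset.mem_map.1 hmem
    rcases d with _ | d'
    · exact absurd (Finset.mem_univ j) (by exact fun _ => j.elim0)
    -- split both multisets
    rw [univ_val_succAbove (0 : Fin (k+1)), univ_val_succAbove j,
        Multiset.map_cons, Multiset.map_cons, Multiset.map_map, Multiset.map_map] at h
    rw [hj] at h
    have h' := (Multiset.cons_inj_right _).1 h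
    obtain ⟨e', he'⟩ := ih (u ∘ (0 : Fin (k+1)).succAbove) (v ∘ j.succAbove) h'
    refine ⟨(finSuccEquiv' (0 : Fin (k+1))).trans
      ((Equiv.optionCongr e').trans (finSuccEquiv' j).symm), ?_⟩
    intro x
    refine Fin.cases ?_ (fun y => ?_) x
    · simp [finSuccEquiv'_symm_none, hj]
    · have h0 : (0 : Fin (k+1)).succAbove y = y.succ := by
        simp [Fin.zero_succAbove]
      have : (finSuccEquiv' (0 : Fin (k+1))) y.succ = some y := by
        rw [← h0]; exact finSuccEquiv'_succAbove _ _
      simp only [Equiv.trans_apply, this, Equiv.optionCongr_apply, Option.map_some,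
        finSuccEquiv'_symm_some]
      have := he' y
      simpa [Function.comp, h0] using this


lemma FF_nil {d : ℕ} (w : Fin 0 → ℕ) (e : Fin d → ℕ) : FF w e = 1 := by
  unfold FF
  have h : (univ.filter Function.Injective : Finset (Fin 0 → Fin d)) = univ :=
    Finset.filter_eq_self.2 (fun f _ a b hab => a.elim0)
  rw [h]
  simp

lemma FF_equiv {k d d' : ℕ} (w : Fin k → ℕ) (e : Fin d → ℕ) (e' : Fin d' → ℕ)
    (π : Fin d ≃ Fin d') (hπ : ∀ x, e' (π x) = e x) : FF w e = FF w e' := by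
  unfold FF
  refine Finset.sum_nbij' (fun f => ⇑π ∘ f) (fun g => ⇑π.symm ∘ g) ?_ ?_ ?_ ?_ ?_
  · intro f hf
    simp only [mem_filter, mem_univ, true_and] at hf ⊢
    exact π.injective.comp hf
  · intro g hg
    simp only [mem_filter, mem_univ, true_and] at hg ⊢
    exact π.symm.injective.comp hg
  · intro f _; funext l; simp
  · intro g _; funext l; simp
  · intro f _
    apply Finset.prod_congr rfl
    intro l _
    simp [hπ]

lemma FF_zero_drop {k d : ℕ} (w : Fin k → ℕ) (hw : ∀ l, 0 < w l)
    (e : Fin (d+1) → ℕ) (j : Fin (d+1)) (hj : e j = 0) :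
    FF w e = FF w (e ∘ j.succAbove) := by
  have hzero : ∀ f : Fin k → Fin (d+1), (∃ l, f l = j) →
      ∏ l, ((e (f l)).descFactorial (w l) : ℚ) = 0 := by
    rintro f ⟨l, hl⟩
    apply Finset.prod_eq_zero (mem_univ l)
    rw [hl, hj]
    obtain ⟨wl, hwl⟩ := Nat.exists_eq_add_of_lt (hw l)
    rw [show w l = wl + 1 by omega]
    simp
  unfold FF
  have hsub : (univ.filter (fun f : Fin k → Fin (d+1) => Function.Injective f ∧ ∀ l, f l ≠ j))
      ⊆ univ.filter Function.Injective := by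
    intro f hf
    simp only [mem_filter, mem_univ, true_and] at hf ⊢
    exact hf.1
  rw [← Finset.sum_subset hsub ?_]
  rotate_left
  · intro f hf hnf
    simp only [mem_filter, mem_univ, true_and, not_and, not_forall, not_not] at hf hnf
    exact hzero f (hnf hf)
  -- now the bijection
  rcases Nat.eq_zero_or_pos d with hd | hd
  · subst hd
    -- Fin 0 target; every g : Fin k → Fin 0 exists only if k = 0
    rcases Nat.eq_zero_or_pos k with hk | hk
    · subst hk
      have h1 : (univ.filter (fun f : Fin 0 → Fin 1 => Function.Injective f ∧ ∀ l, f l ≠ j)) = univ :=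
        Finset.filter_eq_self.2 (fun f _ => ⟨fun a b hab => a.elim0, fun l => l.elim0⟩)
      have h2 : (univ.filter Function.Injective : Finset (Fin 0 → Fin 0)) = univ :=
        Finset.filter_eq_self.2 (fun f _ a b hab => a.elim0)
      rw [h1, h2]
      simp
    · have h1 : (univ.filter (fun f : Fin k → Fin 1 => Function.Injective f ∧ ∀ l, f l ≠ j)) = ∅ := by
        rw [Finset.filter_eq_empty_iff]
        intro f _
        rintro ⟨_, hne⟩
        exact hne ⟨0, hk⟩ (Subsingleton.elim _ _)
      have h2 : (univ : Finset (Fin k → Fin 0)) = ∅ := by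
        rw [Finset.univ_eq_empty_iff]
        exact ⟨fun f => (f ⟨0, hk⟩).elim0⟩
      rw [h1, h2]
      simp
  · set j₀ : Fin d := ⟨0, hd⟩
    have hback : ∀ x : Fin (d+1), x ≠ j → j.succAbove (((finSuccEquiv' j) x).getD j₀) = x := by
      intro x hx
      obtain ⟨y, hy⟩ := Fin.exists_succAbove_eq hx
      rw [← hy, finSuccEquiv'_succAbove]
      rfl
    refine (Finset.sum_nbij' (fun f => fun l => ((finSuccEquiv' j) (f l)).getD j₀)
      (fun g => j.succAbove ∘ g) ?_ ?_ ?_ ?_ ?_)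
    · intro f hf
      simp only [mem_filter, mem_univ, true_and] at hf ⊢
      obtain ⟨hinj, hne⟩ := hf
      intro a b hab
      have hab' : ((finSuccEquiv' j) (f a)).getD j₀ = ((finSuccEquiv' j) (f b)).getD j₀ := hab
      apply hinj
      rw [← hback (f a) (hne a), ← hback (f b) (hne b)]
      exact congrArg _ hab'
    · intro g hg
      simp only [mem_filter, mem_univ, true_and] at hg ⊢
      exact ⟨Fin.succAbove_right_injective.comp hg, fun l => Fin.succAbove_ne j (g l)⟩
    · intro f hf
      simp only [mem_filter, mem_univ, true_and] at hf
      funext l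
      exact hback (f l) (hf.2 l)
    · intro g _
      funext l
      simp only [Function.comp_apply, finSuccEquiv'_succAbove]
      rfl
    · intro f hf
      simp only [mem_filter, mem_univ, true_and] at hf
      apply Finset.prod_congr rfl
      intro l _
      rw [Function.comp_apply, hback (f l) (hf.2 l)]


lemma exists_pos_rep : ∀ {d : ℕ} (e : Fin d → ℕ), ∃ (d' : ℕ) (e' : Fin d' → ℕ),
    (∀ x, 0 < e' x) ∧
    Multiset.map e' (univ : Finset (Fin d')).val
      = Multiset.filter (fun a => 0 < a) (Multiset.map e (univ : Finset (Fin d)).val) ∧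
    ∀ {k : ℕ} (w : Fin k → ℕ), (∀ l, 0 < w l) → FF w e = FF w e' := by
  intro d
  induction d with
  | zero =>
    intro e
    refine ⟨0, e, fun x => x.elim0, by simp, fun w _ => rfl⟩
  | succ d ih =>
    intro e
    by_cases hall : ∀ x, 0 < e x
    · refine ⟨d+1, e, hall, ?_, fun w _ => rfl⟩
      symm
      rw [Multiset.filter_eq_self]
      intro a ha
      obtain ⟨x, _, hx⟩ := Multiset.mem_map.1 ha
      exact hx ▸ hall x
    · push_neg at hall
      obtain ⟨j, hj⟩ := hall
      have hj0 : e j = 0 := by omega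
      obtain ⟨d', e', hpos, hmap, hFF⟩ := ih (e ∘ j.succAbove)
      refine ⟨d', e', hpos, ?_, ?_⟩
      · rw [hmap, univ_val_succAbove j, Multiset.map_cons, Multiset.map_map,
          Multiset.filter_cons_of_neg _ (by simp [hj0])]
      · intro k w hw
        rw [FF_zero_drop w hw e j hj0]
        exact hFF w hw

lemma FF_inv {k : ℕ} (w : Fin k → ℕ) (hw : ∀ l, 0 < w l) {d d' : ℕ}
    (e : Fin d → ℕ) (e' : Fin d' → ℕ)
    (h : Multiset.filter (fun a => 0 < a) (Multiset.map e (univ : Finset (Fin d)).val)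
       = Multiset.filter (fun a => 0 < a) (Multiset.map e' (univ : Finset (Fin d')).val)) :
    FF w e = FF w e' := by
  obtain ⟨d₁, e₁, _, hmap₁, hFF₁⟩ := exists_pos_rep e
  obtain ⟨d₂, e₂, _, hmap₂, hFF₂⟩ := exists_pos_rep e'
  rw [hFF₁ w hw, hFF₂ w hw]
  have hmm : Multiset.map e₁ (univ : Finset (Fin d₁)).val
      = Multiset.map e₂ (univ : Finset (Fin d₂)).val := by
    rw [hmap₁, hmap₂, h]
  obtain ⟨π, hπ⟩ := perm_exists d₁ e₁ e₂ hmm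
  exact FF_equiv w e₁ e₂ π hπ

lemma map_update {d : ℕ} (e : Fin d → ℕ) (p : Fin d) (x : ℕ) :
    Multiset.map (Function.update e p x) (univ : Finset (Fin d)).val
      = x ::ₘ (Multiset.map e (univ : Finset (Fin d)).val).erase (e p) := by
  have hu : (univ : Finset (Fin d)).val = p ::ₘ (univ : Finset (Fin d)).val.erase p :=
    (Multiset.cons_erase (mem_univ_val p)).symm
  have hne : ∀ q ∈ (univ : Finset (Fin d)).val.erase p, q ≠ p := by
    intro q hq
    rintro rfl
    have := (univ : Finset (Fin d)).nodup
    exact (Multiset.Nodup.notMem_erase this) hq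
  calc Multiset.map (Function.update e p x) (univ : Finset (Fin d)).val
      = Multiset.map (Function.update e p x) (p ::ₘ (univ : Finset (Fin d)).val.erase p) := by rw [← hu]
    _ = x ::ₘ Multiset.map (Function.update e p x) ((univ : Finset (Fin d)).val.erase p) := by
        rw [Multiset.map_cons, Function.update_self]
    _ = x ::ₘ Multiset.map e ((univ : Finset (Fin d)).val.erase p) := by
        congr 1
        apply Multiset.map_congr rfl
        intro q hq
        exact Function.update_of_ne (hne q hq) _ _
    _ = x ::ₘ (Multiset.map e (univ : Finset (Fin d)).val).erase (e p) := by
        congr 1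
        have : Multiset.map e (univ : Finset (Fin d)).val
            = e p ::ₘ Multiset.map e ((univ : Finset (Fin d)).val.erase p) := by
          conv_lhs => rw [hu]
          rw [Multiset.map_cons]
        rw [this, Multiset.erase_cons_head]

lemma count_coe (L : List ℕ) (a : ℕ) :
    Multiset.count a (↑L : Multiset ℕ)
      = (univ.filter (fun p : Fin L.length => L.get p = a)).card := by
  rw [← map_univ_get L, Multiset.count_map, ← Multiset.countP_eq_card_filter]
  rw [show (univ.filter (fun p : Fin L.length => L.get p = a)).card
      = Multiset.countP (fun p : Fin L.length => L.get p = a) univ.val by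
    rw [Finset.card_def, Finset.filter_val, Multiset.countP_eq_card_filter]]
  apply Multiset.countP_congr rfl
  intro q _
  simp [eq_comm]


lemma STAR {k d : ℕ} (w : Fin k → ℕ) (e : Fin d → ℕ) :
    ((∑ j, (e j : ℚ)) - ∑ l, (w l : ℚ)) * FF w e
      = ∑ p, (e p : ℚ) * FF w (Function.update e p (e p - 1)) := by
  unfold FF
  have hrw : ∀ p : Fin d, (e p : ℚ) * ∑ f ∈ (univ : Finset (Fin k → Fin d)).filter Function.Injective,
      ∏ l, (((Function.update e p (e p - 1)) (f l)).descFactorial (w l) : ℚ)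
      = ∑ f ∈ (univ : Finset (Fin k → Fin d)).filter Function.Injective,
        (e p : ℚ) * ∏ l, (((Function.update e p (e p - 1)) (f l)).descFactorial (w l) : ℚ) :=
    fun p => Finset.mul_sum _ _ _
  rw [Finset.sum_congr rfl (fun p _ => hrw p), Finset.sum_comm, Finset.mul_sum]
  apply Finset.sum_congr rfl
  intro f hf
  have hfinj : Function.Injective f := by
    simpa only [mem_filter, mem_univ, true_and] using hf
  have hfi : ∀ x ∈ (univ : Finset (Fin k)), ∀ y ∈ univ, f x = f y → x = y :=
    fun x _ y _ hxy => hfinj hxy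
  set T := ∏ l, ((e (f l)).descFactorial (w l) : ℚ) with hT
  have himg : Finset.image f univ ⊆ univ := Finset.subset_univ _
  symm
  rw [← Finset.sum_sdiff himg]
  have h1 : ∀ p ∈ univ \ Finset.image f univ,
      (e p : ℚ) * ∏ l, (((Function.update e p (e p - 1)) (f l)).descFactorial (w l) : ℚ)
        = (e p : ℚ) * T := by
    intro p hp
    simp only [Finset.mem_sdiff, Finset.mem_image, mem_univ, true_and, not_exists] at hp
    congr 1
    apply Finset.prod_congr rfl
    intro l _
    rw [Function.update_of_ne (hp l)]
  have h2 : ∀ l₀ : Fin k,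
      (e (f l₀) : ℚ) * ∏ l, (((Function.update e (f l₀) (e (f l₀) - 1)) (f l)).descFactorial (w l) : ℚ)
        = ((e (f l₀) : ℚ) - w l₀) * T := by
    intro l₀
    rw [Finset.prod_eq_mul_prod_sdiff_singleton_of_mem (mem_univ l₀)
      (fun l => (((Function.update e (f l₀) (e (f l₀) - 1)) (f l)).descFactorial (w l) : ℚ))]
    rw [hT, Finset.prod_eq_mul_prod_sdiff_singleton_of_mem (mem_univ l₀)
      (fun l => ((e (f l)).descFactorial (w l) : ℚ))]
    have hrest : ∏ l ∈ univ \ {l₀}, (((Function.update e (f l₀) (e (f l₀) - 1)) (f l)).descFactorial (w l) : ℚ)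
        = ∏ l ∈ univ \ {l₀}, ((e (f l)).descFactorial (w l) : ℚ) := by
      apply Finset.prod_congr rfl
      intro l hl
      have hll : l ≠ l₀ := by
        simp only [Finset.mem_sdiff, Finset.mem_singleton, mem_univ, true_and] at hl
        exact hl
      rw [Function.update_of_ne (fun hh => hll (hfinj hh))]
    rw [hrest, Function.update_self, ← mul_assoc, ← mul_assoc, descQ_step (e (f l₀)) (w l₀)]
  have hsdiff : ∑ p ∈ univ \ Finset.image f univ, (e p : ℚ)
      = (∑ j, (e j : ℚ)) - ∑ l₀, (e (f l₀) : ℚ) := by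
    rw [Finset.sum_sdiff_eq_sub himg, Finset.sum_image hfi]
  rw [Finset.sum_congr rfl h1, ← Finset.sum_mul, hsdiff, Finset.sum_image hfi,
    Finset.sum_congr rfl (fun l₀ _ => h2 l₀), ← Finset.sum_mul, Finset.sum_sub_distrib]
  ring

lemma term_ne_zero {k d : ℕ} (w : Fin k → ℕ) (e : Fin d → ℕ)
    (hw : ∀ l, 0 < w l) (he : ∀ j, 0 < e j) (hs : (∑ j, e j) ≤ ∑ l, w l)
    (f : Fin k → Fin d) (hf : Function.Injective f)
    (h : ∏ l, ((e (f l)).descFactorial (w l) : ℚ) ≠ 0) :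
    Function.Bijective f ∧ ∀ l, e (f l) = w l := by
  have hfi : ∀ x ∈ (univ : Finset (Fin k)), ∀ y ∈ univ, f x = f y → x = y :=
    fun x _ y _ hxy => hf hxy
  have hfac : ∀ l, w l ≤ e (f l) := by
    intro l
    by_contra hlt
    push_neg at hlt
    refine h (Finset.prod_eq_zero (mem_univ l) ?_)
    rw [show (e (f l)).descFactorial (w l) = 0 from Nat.descFactorial_of_lt hlt]
    norm_num
  have himg_le : ∑ l, e (f l) ≤ ∑ j, e j := by
    rw [← Finset.sum_image hfi]
    exact Finset.sum_le_sum_of_subset (Finset.subset_univ _)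
  have hw_le : ∑ l, w l ≤ ∑ l, e (f l) := Finset.sum_le_sum (fun l _ => hfac l)
  have heq2 : ∑ l, w l = ∑ l, e (f l) := by omega
  have hsurj : Function.Surjective f := by
    have himg : Finset.image f univ = univ := by
      by_contra hne
      have hss : Finset.image f univ ⊂ univ :=
        lt_of_le_of_ne (Finset.subset_univ _) hne
      obtain ⟨j, _, hj_not⟩ := Finset.exists_of_ssubset hss
      have hlt : ∑ p ∈ Finset.image f univ, e p < ∑ j, e j :=
        Finset.sum_lt_sum_of_subset (Finset.subset_univ _) (mem_univ j) hj_not (he j)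
          (fun _ _ _ => Nat.zero_le _)
      rw [Finset.sum_image hfi] at hlt
      omega
    intro j
    have : j ∈ Finset.image f univ := himg ▸ mem_univ j
    obtain ⟨l, _, hl⟩ := Finset.mem_image.1 this
    exact ⟨l, hl⟩
  refine ⟨⟨hf, hsurj⟩, ?_⟩
  intro l
  exact ((Finset.sum_eq_sum_iff_of_le (fun l _ => hfac l)).1 heq2 l (mem_univ l)).symm


def decList (η : List ℕ) (x : ℕ) : List ℕ :=
  if x = 1 then η.erase 1 else (x-1) :: η.erase x

lemma decList_coe (η : List ℕ) (x : ℕ) :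
    (↑(decList η x) : Multiset ℕ)
      = if x = 1 then (↑η : Multiset ℕ).erase 1 else (x-1) ::ₘ (↑η : Multiset ℕ).erase x := by
  unfold decList
  by_cases h : x = 1
  · simp [h, Multiset.coe_erase]
  · simp [h, Multiset.coe_erase, Multiset.cons_coe]

lemma key_comb (η ω : List ℕ) (hη : ∀ a ∈ η, 0 < a) (hω : ∀ a ∈ ω, 0 < a) :
    ∑ x ∈ (↑η : Multiset ℕ).toFinset,
        (((↑η : Multiset ℕ).count x : ℚ) * x) * FF ω.get (decList η x).get
      = ((η.sum : ℚ) - ω.sum) * FF ω.get η.get := by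
  have hwpos : ∀ l : Fin ω.length, 0 < ω.get l := fun l => hω _ (List.get_mem ω l)
  have hsums : ((η.sum : ℚ) - ω.sum) = ((∑ j, (η.get j : ℚ)) - ∑ l, (ω.get l : ℚ)) := by
    rw [show ∑ j, (η.get j : ℚ) = ((∑ j, η.get j : ℕ) : ℚ) by push_cast; rfl,
        show ∑ l, (ω.get l : ℚ) = ((∑ l, ω.get l : ℕ) : ℚ) by push_cast; rfl,
        sum_univ_get, sum_univ_get]
  rw [hsums, STAR ω.get η.get]
  rw [← Finset.sum_fiberwise_of_maps_to
    (g := fun p : Fin η.length => η.get p) (t := (↑η : Multiset ℕ).toFinset)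
    (fun p _ => by
      rw [Multiset.mem_toFinset, Multiset.mem_coe]
      exact List.get_mem η p)
    (fun p => (η.get p : ℚ) * FF ω.get (Function.update η.get p (η.get p - 1)))]
  apply Finset.sum_congr rfl
  intro x hx
  have hxmem : x ∈ η := by
    rw [Multiset.mem_toFinset, Multiset.mem_coe] at hx
    exact hx
  have hxmem' : x ∈ (↑η : Multiset ℕ) := Multiset.mem_coe.2 hxmem
  have hterm : ∀ p ∈ univ.filter (fun p : Fin η.length => η.get p = x),
      (η.get p : ℚ) * FF ω.get (Function.update η.get p (η.get p - 1))
        = (x : ℚ) * FF ω.get (decList η x).get := by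
    intro p hp
    have hpx : η.get p = x := (mem_filter.1 hp).2
    rw [hpx]
    congr 1
    apply FF_inv ω.get hwpos
    rw [map_update, map_univ_get, map_univ_get, hpx, decList_coe]
    by_cases h1 : x = 1
    · rw [if_pos h1, h1]
      rw [show (1:ℕ) - 1 = 0 from rfl, Multiset.filter_cons_of_neg _ (by simp)]
    · rw [if_neg h1]
  rw [Finset.sum_congr rfl hterm, Finset.sum_const]
  rw [show (univ.filter (fun p : Fin η.length => η.get p = x)).card
      = (↑η : Multiset ℕ).count x from (count_coe η x).symm]
  rw [nsmul_eq_mul, ← mul_assoc]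


lemma AW_nil (g : Fin 0 → ℕ) : AW g = 1 := by
  unfold AW
  have h : (univ.filter (fun σ : Fin 0 → Fin 0 => Function.Injective σ ∧ g ∘ σ = g)) = univ :=
    Finset.filter_eq_self.2 (fun σ _ => ⟨fun a b hab => a.elim0, funext fun a => a.elim0⟩)
  rw [h]
  simp

lemma claimA (n : ℕ) : ∀ (η : List ℕ), η.sum = n → (∀ a ∈ η, 0 < a) →
    ∀ (ω : List ℕ), (∀ a ∈ ω, 0 < a) →
    (kdim (↑ω) (↑η) : ℚ) * (AW ω.get : ℚ)
        * ((Multiset.map Nat.factorial (↑η : Multiset ℕ)).prod : ℚ)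
      = ((η.sum - ω.sum).factorial : ℚ) * FF ω.get η.get := by
  induction n using Nat.strong_induction_on with
  | _ n IH =>
  intro η hn hη ω hω
  have hwpos : ∀ l : Fin ω.length, 0 < ω.get l := fun l => hω _ (List.get_mem ω l)
  have hepos : ∀ j : Fin η.length, 0 < η.get j := fun j => hη _ (List.get_mem η j)
  have hsumw : ∑ l, ω.get l = ω.sum := sum_univ_get ω
  have hsume : ∑ j, η.get j = η.sum := sum_univ_get η
  by_cases hbase : η.sum ≤ ω.sum
  · -- base case: fuel is 0
    have hfuel : (↑η : Multiset ℕ).sum - (↑ω : Multiset ℕ).sum = 0 := by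
      rw [Multiset.sum_coe, Multiset.sum_coe]; omega
    have hk : kdim ↑ω ↑η = if (↑ω : Multiset ℕ) = ↑η then 1 else 0 := by
      unfold kdim; rw [hfuel]; rfl
    by_cases heq : (↑ω : Multiset ℕ) = (↑η : Multiset ℕ)
    · have hsum_eq : ω.sum = η.sum := by
        have := congrArg Multiset.sum heq
        rwa [Multiset.sum_coe, Multiset.sum_coe] at this
      have hfac1 : η.sum - ω.sum = 0 := by omega
      rw [hk, if_pos heq, hfac1]
      simp only [Nat.factorial_zero, Nat.cast_one, one_mul]
      have hmm : Multiset.map ω.get (univ : Finset (Fin ω.length)).val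
          = Multiset.map η.get (univ : Finset (Fin η.length)).val := by
        rw [map_univ_get, map_univ_get, heq]
      obtain ⟨π, hπ⟩ := perm_exists _ ω.get η.get hmm
      have hS : ∀ f ∈ (univ : Finset (Fin ω.length → Fin η.length)).filter Function.Injective,
          f ∉ (univ.filter (fun f : Fin ω.length → Fin η.length =>
            Function.Injective f ∧ ∀ l, η.get (f l) = ω.get l)) →
          ∏ l, ((η.get (f l)).descFactorial (ω.get l) : ℚ) = 0 := by
        intro f hf hnf
        by_contra hne
        simp only [mem_filter, mem_univ, true_and] at hf hnf
        exact hnf ⟨hf,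
          (term_ne_zero ω.get η.get hwpos hepos (by omega) f hf hne).2⟩
      have hsub2 : (univ.filter (fun f : Fin ω.length → Fin η.length =>
          Function.Injective f ∧ ∀ l, η.get (f l) = ω.get l))
            ⊆ univ.filter Function.Injective := by
        intro f hf; simp only [mem_filter, mem_univ, true_and] at hf ⊢; exact hf.1
      unfold FF
      rw [← Finset.sum_subset hsub2 hS]
      have hval : ∀ f ∈ (univ.filter (fun f : Fin ω.length → Fin η.length =>
          Function.Injective f ∧ ∀ l, η.get (f l) = ω.get l)),
          ∏ l, ((η.get (f l)).descFactorial (ω.get l) : ℚ)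
            = ∏ l, ((ω.get l).factorial : ℚ) := by
        intro f hf
        simp only [mem_filter, mem_univ, true_and] at hf
        refine Finset.prod_congr rfl (fun l _ => ?_)
        rw [hf.2 l, Nat.descFactorial_self]
      rw [Finset.sum_congr rfl hval, Finset.sum_const, nsmul_eq_mul]
      have hcard : (univ.filter (fun f : Fin ω.length → Fin η.length =>
          Function.Injective f ∧ ∀ l, η.get (f l) = ω.get l)).card = AW ω.get := by
        unfold AW
        apply Finset.card_nbij' (fun f => fun l => π.symm (f l)) (fun σ => fun l => π (σ l))
        · intro f hf
          simp only [Finset.mem_coe, mem_filter, mem_univ, true_and] at hf ⊢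
          refine ⟨fun a b hab => hf.1 (π.symm.injective hab), funext fun l => ?_⟩
          show ω.get (π.symm (f l)) = ω.get l
          rw [← hπ (π.symm (f l)), Equiv.apply_symm_apply, hf.2 l]
        · intro σ hσ
          simp only [Finset.mem_coe, mem_filter, mem_univ, true_and] at hσ ⊢
          refine ⟨fun a b hab => hσ.1 (π.injective hab), fun l => ?_⟩
          rw [hπ (σ l)]
          exact congrFun hσ.2 l
        · intro f _; funext l; simp
        · intro σ _; funext l; simp
      rw [hcard]
      have hPη : ((Multiset.map Nat.factorial (↑η : Multiset ℕ)).prod : ℚ)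
          = ∏ l, ((ω.get l).factorial : ℚ) := by
        rw [prod_univ_get_factorial]
        exact (Fintype.prod_equiv π (fun l => ((ω.get l).factorial : ℚ))
          (fun j => ((η.get j).factorial : ℚ)) (fun l => by
            show ((ω.get l).factorial : ℚ) = ((η.get (π l)).factorial : ℚ)
            rw [hπ l])).symm
      rw [hPη]
    · rw [hk, if_neg heq]
      have hFF0 : FF ω.get η.get = 0 := by
        unfold FF
        apply Finset.sum_eq_zero
        intro f hf
        simp only [mem_filter, mem_univ, true_and] at hf
        by_contra hne
        obtain ⟨hbij, hvals⟩ := term_ne_zero ω.get η.get hwpos hepos (by omega) f hf hne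
        apply heq
        rw [← map_univ_get ω, ← map_univ_get η]
        have h2 : Multiset.map ω.get (univ : Finset (Fin ω.length)).val
            = Multiset.map (η.get ∘ f) (univ : Finset (Fin ω.length)).val :=
          Multiset.map_congr rfl (fun l _ => (hvals l).symm)
        rw [h2, ← Multiset.map_map, (Multiset.bijective_iff_map_univ_eq_univ f).1 hbij]
      rw [hFF0]
      push_cast
      ring
  · -- step case
    push_neg at hbase
    have hn1 : 1 ≤ η.sum := by omega
    have hfuel : (↑η : Multiset ℕ).sum - (↑ω : Multiset ℕ).sum
        = (η.sum - ω.sum - 1) + 1 := by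
      rw [Multiset.sum_coe, Multiset.sum_coe]; omega
    have hk : kdim ↑ω ↑η = ∑ lam ∈ downSet ↑η,
        chiW lam ↑η * kdimAux (η.sum - ω.sum - 1) ↑ω lam := by
      unfold kdim
      rw [hfuel]
      rfl
    have hinj : ∀ x ∈ (↑η : Multiset ℕ).toFinset, ∀ y ∈ (↑η : Multiset ℕ).toFinset,
        (if x = 1 then (↑η : Multiset ℕ).erase 1 else (x-1) ::ₘ (↑η : Multiset ℕ).erase x)
          = (if y = 1 then (↑η : Multiset ℕ).erase 1 else (y-1) ::ₘ (↑η : Multiset ℕ).erase y)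
        → x = y := by
      intro x hx y hy hxy
      by_contra hne
      rw [Multiset.mem_toFinset] at hx hy
      have hxpos : 0 < x := hη x (Multiset.mem_coe.1 hx)
      have hypos : 0 < y := hη y (Multiset.mem_coe.1 hy)
      have hycnt : 1 ≤ (↑η : Multiset ℕ).count y := Multiset.one_le_count_iff_mem.2 hy
      have hcy : Multiset.count y
          (if y = 1 then (↑η : Multiset ℕ).erase 1 else (y-1) ::ₘ (↑η : Multiset ℕ).erase y)
            = (↑η : Multiset ℕ).count y - 1 := by
        by_cases h1 : y = 1
        · rw [if_pos h1, h1, Multiset.count_erase_self]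
        · rw [if_neg h1, Multiset.count_cons, Multiset.count_erase_self,
            if_neg (by omega : ¬ y = y - 1)]
          omega
      have hcx : (↑η : Multiset ℕ).count y ≤ Multiset.count y
          (if x = 1 then (↑η : Multiset ℕ).erase 1 else (x-1) ::ₘ (↑η : Multiset ℕ).erase x) := by
        by_cases h1 : x = 1
        · rw [if_pos h1, Multiset.count_erase_of_ne (by omega : y ≠ 1)]
        · rw [if_neg h1, Multiset.count_cons, Multiset.count_erase_of_ne (by omega : y ≠ x)]
          omega
      rw [hxy, hcy] at hcx
      omega
    rw [hk]
    unfold downSet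
    rw [Finset.sum_image hinj]
    -- per-x facts
    have hper : ∀ x ∈ (↑η : Multiset ℕ).toFinset,
        ((chiW (if x = 1 then (↑η : Multiset ℕ).erase 1 else (x-1) ::ₘ (↑η : Multiset ℕ).erase x) ↑η
          * kdimAux (η.sum - ω.sum - 1) ↑ω
            (if x = 1 then (↑η : Multiset ℕ).erase 1 else (x-1) ::ₘ (↑η : Multiset ℕ).erase x) : ℕ) : ℚ)
          * (AW ω.get : ℚ) * ((Multiset.map Nat.factorial (↑η : Multiset ℕ)).prod : ℚ)
        = ((η.sum - 1 - ω.sum).factorial : ℚ)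
            * ((((↑η : Multiset ℕ).count x : ℚ) * x) * FF ω.get (decList η x).get) := by
      intro x hx
      rw [Multiset.mem_toFinset] at hx
      have hxmem : x ∈ η := Multiset.mem_coe.1 hx
      have hxpos : 0 < x := hη x hxmem
      have hxle : x ≤ η.sum := by
        have := Multiset.single_le_sum (fun a _ => Nat.zero_le a) x hx
        rwa [Multiset.sum_coe] at this
      have hηx : (↑η : Multiset ℕ) = x ::ₘ (↑η : Multiset ℕ).erase x :=
        (Multiset.cons_erase hx).symm
      have herasesum : ((↑η : Multiset ℕ).erase x).sum = η.sum - x := by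
        have := congrArg Multiset.sum hηx
        rw [Multiset.sum_cons, Multiset.sum_coe] at this
        omega
      -- A : coe
      have hA : (↑(decList η x) : Multiset ℕ)
          = (if x = 1 then (↑η : Multiset ℕ).erase 1 else (x-1) ::ₘ (↑η : Multiset ℕ).erase x) :=
        decList_coe η x
      -- B : sum
      have hB : (decList η x).sum = η.sum - 1 := by
        have h2 : (↑(decList η x) : Multiset ℕ).sum = η.sum - 1 := by
          rw [hA]
          by_cases h1 : x = 1
          · subst h1
            rw [if_pos rfl, herasesum]
          · rw [if_neg h1, Multiset.sum_cons, herasesum]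
            omega
        rwa [Multiset.sum_coe] at h2
      -- D : positivity
      have hD : ∀ a ∈ decList η x, 0 < a := by
        intro a ha
        unfold decList at ha
        by_cases h1 : x = 1
        · rw [if_pos h1] at ha
          exact hη a (List.mem_of_mem_erase ha)
        · rw [if_neg h1] at ha
          rcases List.mem_cons.1 ha with h | h
          · omega
          · exact hη a (List.mem_of_mem_erase h)
      -- C : chiW
      have hdiff : (↑η : Multiset ℕ)
          - (if x = 1 then (↑η : Multiset ℕ).erase 1 else (x-1) ::ₘ (↑η : Multiset ℕ).erase x)
          = {x} := by
        ext j
        rw [Multiset.count_sub, Multiset.count_singleton]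
        by_cases h1 : x = 1
        · rw [if_pos h1]
          subst h1
          by_cases hj : j = 1
          · subst hj
            rw [Multiset.count_erase_self, if_pos rfl]
            have hc1 : 1 ≤ (↑η : Multiset ℕ).count 1 := Multiset.one_le_count_iff_mem.2 hx
            omega
          · rw [Multiset.count_erase_of_ne hj, if_neg hj]
            omega
        · rw [if_neg h1, Multiset.count_cons]
          by_cases hj : j = x
          · subst hj
            rw [Multiset.count_erase_self, if_neg (by omega : ¬ j = j - 1), if_pos rfl]
            have hc1 : 1 ≤ (↑η : Multiset ℕ).count j := Multiset.one_le_count_iff_mem.2 hx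
            omega
          · rw [Multiset.count_erase_of_ne hj, if_neg hj]
            by_cases hj2 : j = x - 1
            · rw [if_pos hj2]; omega
            · rw [if_neg hj2]; omega
      have hC : chiW (if x = 1 then (↑η : Multiset ℕ).erase 1
          else (x-1) ::ₘ (↑η : Multiset ℕ).erase x) ↑η = (↑η : Multiset ℕ).count x := by
        unfold chiW
        rw [hdiff, Multiset.sum_singleton]
      -- E : kdimAux is kdim of decList
      have hE : kdimAux (η.sum - ω.sum - 1) ↑ω
          (if x = 1 then (↑η : Multiset ℕ).erase 1 else (x-1) ::ₘ (↑η : Multiset ℕ).erase x)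
          = kdim ↑ω ↑(decList η x) := by
        rw [← hA]
        unfold kdim
        rw [Multiset.sum_coe, Multiset.sum_coe, hB,
          (by omega : η.sum - ω.sum - 1 = η.sum - 1 - ω.sum)]
      -- IH
      have hIH := IH (η.sum - 1) (by omega) (decList η x) hB hD ω hω
      rw [hB] at hIH
      -- G : factorial product
      have hG : ((Multiset.map Nat.factorial (↑η : Multiset ℕ)).prod : ℚ)
          = (x : ℚ) * ((Multiset.map Nat.factorial (↑(decList η x) : Multiset ℕ)).prod : ℚ) := by
        rw [hA]
        by_cases h1 : x = 1
        · subst h1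
          conv_lhs => rw [hηx]
          rw [if_pos rfl, Multiset.map_cons, Multiset.prod_cons]
          norm_num [Nat.factorial]
        · conv_lhs => rw [hηx]
          rw [if_neg h1, Multiset.map_cons, Multiset.prod_cons,
            Multiset.map_cons, Multiset.prod_cons]
          have hfx : x.factorial = x * (x-1).factorial := by
            conv_lhs => rw [show x = (x-1)+1 by omega]
            rw [Nat.factorial_succ]
            congr 1
            omega
          rw [hfx]
          push_cast
          ring
      rw [hC, hE, Nat.cast_mul, hG]
      calc ((↑η : Multiset ℕ).count x : ℚ) * (kdim ↑ω ↑(decList η x) : ℚ) * (AW ω.get : ℚ)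
            * ((x:ℚ) * ((Multiset.map Nat.factorial (↑(decList η x) : Multiset ℕ)).prod : ℚ))
          = (((↑η : Multiset ℕ).count x : ℚ) * x)
            * ((kdim ↑ω ↑(decList η x) : ℚ) * (AW ω.get : ℚ)
                * ((Multiset.map Nat.factorial (↑(decList η x) : Multiset ℕ)).prod : ℚ)) := by ring
        _ = (((↑η : Multiset ℕ).count x : ℚ) * x)
            * (((η.sum - 1 - ω.sum).factorial : ℚ) * FF ω.get (decList η x).get) := by rw [hIH]
        _ = ((η.sum - 1 - ω.sum).factorial : ℚ)
            * ((((↑η : Multiset ℕ).count x : ℚ) * x) * FF ω.get (decList η x).get) := by ring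
    -- assemble
    rw [Nat.cast_sum, Finset.sum_mul, Finset.sum_mul,
      Finset.sum_congr rfl hper, ← Finset.mul_sum, key_comb η ω hη hω]
    have hfinal : ((η.sum : ℚ) - ω.sum) = ((η.sum - ω.sum : ℕ) : ℚ) := by
      rw [Nat.cast_sub (by omega)]
    rw [hfinal]
    have hfact : ((η.sum - ω.sum).factorial : ℚ)
        = ((η.sum - 1 - ω.sum).factorial : ℚ) * ((η.sum - ω.sum : ℕ) : ℚ) := by
      have h1 : η.sum - ω.sum = (η.sum - 1 - ω.sum) + 1 := by omega
      rw [h1, Nat.factorial_succ]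
      push_cast
      ring
    rw [hfact]
    ring


section Fiber

variable {k d : ℕ}

lemma card_image_univ (f : Fin k → Fin d) (hf : Function.Injective f) :
    (Finset.image f univ).card = k := by
  rw [Finset.card_image_of_injective _ hf, Finset.card_univ, Fintype.card_fin]

noncomputable def sfun (f : Fin k → Fin d) (hf : Function.Injective f) : Fin k → Fin d :=
  ⇑((Finset.image f univ).orderEmbOfFin (card_image_univ f hf))

noncomputable def rho0 (f : Fin k → Fin d) (hf : Function.Injective f) : Fin k → Fin k :=
  fun l => ((Finset.image f univ).orderIsoOfFin (card_image_univ f hf)).symm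
    ⟨f l, Finset.mem_image_of_mem f (mem_univ l)⟩

lemma sfun_rho0 (f : Fin k → Fin d) (hf : Function.Injective f) (l : Fin k) :
    sfun f hf (rho0 f hf l) = f l := by
  unfold sfun rho0
  rw [← Finset.coe_orderIsoOfFin_apply, OrderIso.apply_symm_apply]

lemma rho0_bij (f : Fin k → Fin d) (hf : Function.Injective f) :
    Function.Bijective (rho0 f hf) := by
  rw [← Finite.injective_iff_bijective]
  intro a b hab
  apply hf
  rw [← sfun_rho0 f hf a, ← sfun_rho0 f hf b, hab]

noncomputable def rho (f : Fin k → Fin d) (hf : Function.Injective f) : Fin k ≃ Fin k :=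
  Equiv.ofBijective _ (rho0_bij f hf)

lemma sfun_rho (f : Fin k → Fin d) (hf : Function.Injective f) (l : Fin k) :
    sfun f hf (rho f hf l) = f l := sfun_rho0 f hf l

lemma sfun_strictMono (f : Fin k → Fin d) (hf : Function.Injective f) :
    StrictMono (sfun f hf) :=
  ((Finset.image f univ).orderEmbOfFin (card_image_univ f hf)).strictMono

noncomputable def theta {m : ℕ} (w : Fin k → ℕ) (hwm : ∀ l, w l < m+1)
    (f : Fin k → Fin d) : (Fin k → Fin d) × (Fin k → Fin (m+1)) :=
  if hf : Function.Injective f then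
    (sfun f hf, fun l => ⟨w ((rho f hf).symm l), hwm _⟩)
  else (f, fun _ => ⟨0, Nat.succ_pos m⟩)

lemma theta_unique (s : Fin k → Fin d) (hs : StrictMono s)
    (π : Fin k → Fin k) (hπ : Function.Bijective π) :
    ∃ hf : Function.Injective (fun l => s (π l)),
      sfun (fun l => s (π l)) hf = s ∧ ∀ l, rho (fun l => s (π l)) hf l = π l := by
  have hf : Function.Injective (fun l => s (π l)) :=
    fun a b hab => hπ.1 (hs.injective hab)
  have hfs : ∀ x, s x ∈ Finset.image (fun l => s (π l)) univ := by
    intro x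
    obtain ⟨y, hy⟩ := hπ.2 x
    exact Finset.mem_image.2 ⟨y, mem_univ _, by rw [hy]⟩
  have hsfun : sfun (fun l => s (π l)) hf = s :=
    (Finset.orderEmbOfFin_unique (card_image_univ _ hf) hfs hs).symm
  refine ⟨hf, hsfun, fun l => ?_⟩
  apply hs.injective
  rw [← congrFun hsfun (rho _ hf l)]
  exact sfun_rho _ hf l

end Fiber

lemma fiber_count {k d m : ℕ} (w : Fin k → ℕ) (e : Fin d → ℕ) (hwm : ∀ l, w l < m + 1) :
    (AW w : ℚ) * (∑ s ∈ (univ : Finset (Fin k → Fin d)).filter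
          (fun s => ∀ a b : Fin k, a < b → s a < s b),
        ∑ v ∈ (univ : Finset (Fin k → Fin (m + 1))).filter
            (fun v => Multiset.map (fun l => ((v l : ℕ))) (univ : Finset (Fin k)).val
              = Multiset.map w (univ : Finset (Fin k)).val),
          ∏ l, ((e (s l)).descFactorial (v l : ℕ) : ℚ))
      = FF w e := by
  classical
  rw [← Finset.sum_product']
  have hmaps : ∀ f ∈ (univ : Finset (Fin k → Fin d)).filter Function.Injective,
      theta w hwm f ∈ ((univ : Finset (Fin k → Fin d)).filter
          (fun s => ∀ a b : Fin k, a < b → s a < s b)) ×ˢ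
        ((univ : Finset (Fin k → Fin (m + 1))).filter
          (fun v => Multiset.map (fun l => ((v l : ℕ))) (univ : Finset (Fin k)).val
            = Multiset.map w (univ : Finset (Fin k)).val)) := by
    intro f hf
    simp only [mem_filter, mem_univ, true_and] at hf
    rw [Finset.mem_product]
    constructor
    · rw [mem_filter]
      refine ⟨mem_univ _, ?_⟩
      unfold theta
      rw [dif_pos hf]
      intro a b hab
      exact sfun_strictMono f hf hab
    · rw [mem_filter]
      refine ⟨mem_univ _, ?_⟩
      unfold theta
      rw [dif_pos hf]
      show Multiset.map (fun l => w ((rho f hf).symm l)) univ.val = _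
      rw [show (fun l => w ((rho f hf).symm l)) = w ∘ ⇑(rho f hf).symm from rfl,
        ← Multiset.map_map, Multiset.map_univ_val_equiv]
  unfold FF
  rw [← Finset.sum_fiberwise_of_maps_to hmaps
    (fun f => ∏ l, ((e (f l)).descFactorial (w l) : ℚ))]
  rw [Finset.mul_sum]
  apply Finset.sum_congr rfl
  intro p hp
  rw [Finset.mem_product, mem_filter, mem_filter] at hp
  have hsmono : StrictMono p.1 := fun a b h => hp.1.2 a b h
  have hperm : Multiset.map w (univ : Finset (Fin k)).val
      = Multiset.map (fun l => ((p.2 l : ℕ))) (univ : Finset (Fin k)).val := hp.2.2.symm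
  obtain ⟨τ, hτ⟩ := perm_exists k w (fun l => ((p.2 l : ℕ))) hperm
  have hw_τsymm : ∀ y, w (τ.symm y) = (p.2 y : ℕ) := by
    intro y
    have := hτ (τ.symm y)
    rw [Equiv.apply_symm_apply] at this
    exact this.symm
  -- characterize membership in the fiber
  have hchar : ∀ f (hf : Function.Injective f), theta w hwm f = p →
      (p.1 = sfun f hf ∧ ∀ y, (p.2 y : ℕ) = w ((rho f hf).symm y)) := by
    intro f hf hth
    unfold theta at hth
    rw [dif_pos hf] at hth
    constructor
    · rw [← hth]
    · intro y
      rw [← hth]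
  -- value constant on fiber
  have hconst : ∀ f ∈ ((univ : Finset (Fin k → Fin d)).filter Function.Injective).filter
      (fun f => theta w hwm f = p),
      ∏ l, ((e (f l)).descFactorial (w l) : ℚ)
        = ∏ l, ((e (p.1 l)).descFactorial ((p.2 l : ℕ)) : ℚ) := by
    intro f hff
    simp only [mem_filter, mem_univ, true_and] at hff
    obtain ⟨hf, hth⟩ := hff
    obtain ⟨hp1c, hp2c⟩ := hchar f hf hth
    refine Fintype.prod_equiv (rho f hf) _ _ (fun l => ?_)
    rw [hp1c, sfun_rho, hp2c, Equiv.symm_apply_apply]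
  -- fiber cardinality
  have hcount : (((univ : Finset (Fin k → Fin d)).filter Function.Injective).filter
      (fun f => theta w hwm f = p)).card = AW w := by
    unfold AW
    apply Finset.card_nbij'
      (fun f => if hf : Function.Injective f then (fun l => τ.symm (rho f hf l)) else fun l => l)
      (fun σ => fun l => p.1 (τ (σ l)))
    · -- i maps fiber into AW-set
      intro f hff
      simp only [Finset.mem_coe, mem_filter, mem_univ, true_and] at hff ⊢
      obtain ⟨hf, hth⟩ := hff
      obtain ⟨hp1c, hp2c⟩ := hchar f hf hth
      rw [dif_pos hf]
      constructor
      · intro a b hab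
        have := τ.symm.injective hab
        exact (rho f hf).injective this
      · funext l
        show w (τ.symm (rho f hf l)) = w l
        rw [hw_τsymm, hp2c, Equiv.symm_apply_apply]
    · -- j maps AW-set into fiber
      intro σ hσ
      simp only [Finset.mem_coe, mem_filter, mem_univ, true_and] at hσ ⊢
      obtain ⟨hσinj, hσw⟩ := hσ
      have hπbij : Function.Bijective (fun l => τ (σ l)) :=
        τ.bijective.comp (Finite.injective_iff_bijective.1 hσinj)
      obtain ⟨hf', hsfun', hrho'⟩ := theta_unique p.1 hsmono (fun l => τ (σ l)) hπbij
      refine ⟨hf', ?_⟩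
      unfold theta
      rw [dif_pos hf']
      have hsnd : (fun l => (⟨w ((rho (fun l => p.1 (τ (σ l))) hf').symm l), hwm _⟩ : Fin (m+1)))
          = p.2 := by
        funext l
        apply Fin.ext
        show w ((rho (fun l => p.1 (τ (σ l))) hf').symm l) = (p.2 l : ℕ)
        set y := (rho (fun l => p.1 (τ (σ l))) hf').symm l with hy
        have hl : l = τ (σ y) := by
          rw [← hrho' y, hy, Equiv.apply_symm_apply]
        rw [hl, hτ (σ y)]
        exact (congrFun hσw y).symm
      rw [hsfun', hsnd]
    · -- left inverse
      intro f hff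
      simp only [Finset.mem_coe, mem_filter, mem_univ, true_and] at hff
      obtain ⟨hf, hth⟩ := hff
      obtain ⟨hp1c, _⟩ := hchar f hf hth
      beta_reduce
      rw [dif_pos hf]
      funext l
      show p.1 (τ (τ.symm (rho f hf l))) = f l
      rw [Equiv.apply_symm_apply, hp1c, sfun_rho]
    · -- right inverse
      intro σ hσ
      simp only [Finset.mem_coe, mem_filter, mem_univ, true_and] at hσ
      obtain ⟨hσinj, hσw⟩ := hσ
      have hπbij : Function.Bijective (fun l => τ (σ l)) :=
        τ.bijective.comp (Finite.injective_iff_bijective.1 hσinj)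
      obtain ⟨hf', hsfun', hrho'⟩ := theta_unique p.1 hsmono (fun l => τ (σ l)) hπbij
      beta_reduce
      rw [dif_pos hf']
      funext l
      show τ.symm (rho (fun l => p.1 (τ (σ l))) hf' l) = σ l
      rw [hrho' l, Equiv.symm_apply_apply]
  rw [Finset.sum_congr rfl hconst, Finset.sum_const, hcount, nsmul_eq_mul]


lemma multiset_sum_eq (B : ℕ) : ∀ (s : Multiset ℕ), (∀ a ∈ s, a ≤ B) →
    s.sum = ∑ k ∈ Finset.Icc 1 B, Multiset.card (s.filter (fun a => k ≤ a)) := by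
  intro s
  induction s using Multiset.induction with
  | empty => intro _; simp
  | cons a s ih =>
    intro hB
    rw [Multiset.sum_cons, ih (fun x hx => hB x (Multiset.mem_cons_of_mem hx))]
    have hfc : ∀ k : ℕ, Multiset.card (Multiset.filter (fun x => k ≤ x) (a ::ₘ s))
        = Multiset.card (Multiset.filter (fun x => k ≤ x) s) + (if k ≤ a then 1 else 0) := by
      intro k
      rw [Multiset.filter_cons]
      by_cases h : k ≤ a
      · rw [if_pos h]; simp [h]
      · rw [if_neg h]; simp [h]
    rw [Finset.sum_congr rfl (fun k _ => hfc k), Finset.sum_add_distrib]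
    have ha : ∑ k ∈ Finset.Icc 1 B, (if k ≤ a then 1 else 0) = a := by
      rw [← Finset.sum_filter]
      simp only [Finset.sum_const, smul_eq_mul, mul_one]
      have : Finset.filter (fun k => k ≤ a) (Finset.Icc 1 B) = Finset.Icc 1 a := by
        ext x
        simp only [Finset.mem_filter, Finset.mem_Icc]
        have hab : a ≤ B := hB a (Multiset.mem_cons_self a s)
        omega
      rw [this, Nat.card_Icc]
      omega
    omega

lemma ydLE_sum_le {ω η : List ℕ} (h : ydLE (↑ω) (↑η)) : ω.sum ≤ η.sum := by
  set B := ω.sum + η.sum with hB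
  have hbω : ∀ a ∈ (↑ω : Multiset ℕ), a ≤ B := by
    intro a ha
    have := Multiset.single_le_sum (fun x _ => Nat.zero_le x) a ha
    rw [Multiset.sum_coe] at this
    omega
  have hbη : ∀ a ∈ (↑η : Multiset ℕ), a ≤ B := by
    intro a ha
    have := Multiset.single_le_sum (fun x _ => Nat.zero_le x) a ha
    rw [Multiset.sum_coe] at this
    omega
  have h1 := multiset_sum_eq B (↑ω) hbω
  have h2 := multiset_sum_eq B (↑η) hbη
  rw [Multiset.sum_coe] at h1 h2
  rw [h1, h2]
  exact Finset.sum_le_sum (fun kk _ => h kk)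

end KGH

/-- `dim(ω,η)/dim(η)` equals the hypergeometric-type sum
`∑_{i₁<⋯<i_k} ∑_{(v) ranked = ω} ∏ (η_{i_l})_{[v_l]} / n_{[m]}`. -/
theorem dim_ratio_hypergeometric (m n k d : ℕ) (ω η : List ℕ)
    (hposω : ∀ a ∈ ω, 0 < a) (hposη : ∀ a ∈ η, 0 < a)
    (hsortω : ω.Pairwise (· ≥ ·)) (hsortη : η.Pairwise (· ≥ ·))
    (hm : ω.sum = m) (hn : η.sum = n) (hk : ω.length = k) (hd : η.length = d)
    (hsub : ydLE (ω : Multiset ℕ) (η : Multiset ℕ)) :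
    (kdim (ω : Multiset ℕ) (η : Multiset ℕ) : ℚ) / (kdim 0 (η : Multiset ℕ) : ℚ) =
      (∑ s ∈ (Finset.univ : Finset (Fin k → Fin d)).filter
          (fun s => ∀ a b : Fin k, a < b → s a < s b),
        ∑ v ∈ (Finset.univ : Finset (Fin k → Fin (m + 1))).filter
            (fun v => Multiset.map (fun l => ((v l : ℕ)))
              (Finset.univ : Finset (Fin k)).val = (ω : Multiset ℕ)),
          ∏ l, ((η.getD (s l : ℕ) 0).descFactorial (v l : ℕ) : ℚ)) /
        (n.descFactorial m : ℚ) := by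
  classical
  subst hm hn hk hd
  have hmle : ω.sum ≤ η.sum := KGH.ydLE_sum_le hsub
  have hwm : ∀ l : Fin ω.length, ω.get l < ω.sum + 1 := by
    intro l
    have hmem : ω.get l ∈ (↑ω : Multiset ℕ) :=
      Multiset.mem_coe.2 (List.get_mem ω l)
    have := Multiset.single_le_sum (fun x _ => Nat.zero_le x) _ hmem
    rw [Multiset.sum_coe] at this
    omega
  -- Claim A for ω and for []
  have hA := KGH.claimA η.sum η rfl hposη ω hposω
  have hB := KGH.claimA η.sum η rfl hposη [] (by simp)
  rw [KGH.AW_nil, KGH.FF_nil] at hB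
  simp only [List.sum_nil, Nat.sub_zero, Nat.cast_one, mul_one] at hB
  -- hB : (kdim ↑[] ↑η : ℚ) * Pη = (η.sum)!
  have h0 : kdim 0 (↑η) = kdim (↑([] : List ℕ)) (↑η) := by
    norm_num
  -- numerator conversion
  have hfib := KGH.fiber_count ω.get η.get hwm
  have hN : (∑ s ∈ (Finset.univ : Finset (Fin ω.length → Fin η.length)).filter
          (fun s => ∀ a b : Fin ω.length, a < b → s a < s b),
        ∑ v ∈ (Finset.univ : Finset (Fin ω.length → Fin (ω.sum + 1))).filter
            (fun v => Multiset.map (fun l => ((v l : ℕ)))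
              (Finset.univ : Finset (Fin ω.length)).val = (ω : Multiset ℕ)),
          ∏ l, ((η.getD (s l : ℕ) 0).descFactorial (v l : ℕ) : ℚ))
      = (∑ s ∈ (Finset.univ : Finset (Fin ω.length → Fin η.length)).filter
          (fun s => ∀ a b : Fin ω.length, a < b → s a < s b),
        ∑ v ∈ (Finset.univ : Finset (Fin ω.length → Fin (ω.sum + 1))).filter
            (fun v => Multiset.map (fun l => ((v l : ℕ)))
              (Finset.univ : Finset (Fin ω.length)).val
                = Multiset.map ω.get (Finset.univ : Finset (Fin ω.length)).val),
          ∏ l, ((η.get (s l)).descFactorial (v l : ℕ) : ℚ)) := by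
    rw [KGH.map_univ_get]
    refine Finset.sum_congr rfl (fun s _ => Finset.sum_congr rfl (fun v _ =>
      Finset.prod_congr rfl (fun l _ => ?_)))
    congr 2
    rw [List.getD_eq_getElem η 0 (s l).isLt]
    rw [List.get_eq_getElem]
  rw [hN, h0]
  -- abbreviations
  set K : ℚ := (kdim (↑ω) (↑η) : ℚ) with hK
  set K0 : ℚ := (kdim (↑([] : List ℕ)) (↑η) : ℚ) with hK0
  set A : ℚ := (KGH.AW ω.get : ℚ) with hAq
  set P : ℚ := ((Multiset.map Nat.factorial (↑η : Multiset ℕ)).prod : ℚ) with hP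
  set F : ℚ := KGH.FF ω.get η.get with hF
  set N : ℚ := (∑ s ∈ (Finset.univ : Finset (Fin ω.length → Fin η.length)).filter
          (fun s => ∀ a b : Fin ω.length, a < b → s a < s b),
        ∑ v ∈ (Finset.univ : Finset (Fin ω.length → Fin (ω.sum + 1))).filter
            (fun v => Multiset.map (fun l => ((v l : ℕ)))
              (Finset.univ : Finset (Fin ω.length)).val
                = Multiset.map ω.get (Finset.univ : Finset (Fin ω.length)).val),
          ∏ l, ((η.get (s l)).descFactorial (v l : ℕ) : ℚ)) with hNdef
  -- positivity facts
  have hPpos : (0 : ℚ) < P := by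
    rw [hP]
    have : 0 < (Multiset.map Nat.factorial (↑η : Multiset ℕ)).prod := by
      apply Multiset.prod_pos
      intro x hx
      obtain ⟨a, _, ha⟩ := Multiset.mem_map.1 hx
      rw [← ha]
      exact Nat.factorial_pos a
    exact_mod_cast this
  have hPne : P ≠ 0 := ne_of_gt hPpos
  have hAne : A ≠ 0 := by
    rw [hAq]
    have := KGH.AW_pos ω.get
    positivity
  have hK0ne : K0 ≠ 0 := by
    intro hzero
    rw [hzero] at hB
    simp only [zero_mul] at hB
    exact (Nat.cast_ne_zero.2 (Nat.factorial_ne_zero η.sum)) hB.symm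
  have hDne : ((η.sum.descFactorial ω.sum : ℕ) : ℚ) ≠ 0 := by
    rw [Nat.cast_ne_zero]
    intro hzero
    rw [Nat.descFactorial_eq_zero_iff_lt] at hzero
    omega
  have hDfact : ((η.sum.descFactorial ω.sum : ℕ) : ℚ) * ((η.sum - ω.sum).factorial : ℚ)
      = (η.sum.factorial : ℚ) := by
    rw [show (η.sum.descFactorial ω.sum) = ω.sum.factorial * η.sum.choose ω.sum from
      Nat.descFactorial_eq_factorial_mul_choose _ _]
    rw [← Nat.cast_mul]
    congr 1
    calc ω.sum.factorial * η.sum.choose ω.sum * (η.sum - ω.sum).factorial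
        = η.sum.choose ω.sum * ω.sum.factorial * (η.sum - ω.sum).factorial := by ring
      _ = η.sum.factorial := Nat.choose_mul_factorial_mul_factorial hmle
  -- final algebra
  rw [div_eq_div_iff hK0ne hDne]
  have hcancel : K * ((η.sum.descFactorial ω.sum : ℕ) : ℚ) * (A * P)
      = N * K0 * (A * P) := by
    calc K * ((η.sum.descFactorial ω.sum : ℕ) : ℚ) * (A * P)
        = (K * A * P) * ((η.sum.descFactorial ω.sum : ℕ) : ℚ) := by ring
      _ = (((η.sum - ω.sum).factorial : ℚ) * F) * ((η.sum.descFactorial ω.sum : ℕ) : ℚ) := by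
          rw [hA]
      _ = F * (((η.sum.descFactorial ω.sum : ℕ) : ℚ) * ((η.sum - ω.sum).factorial : ℚ)) := by
          ring
      _ = F * (η.sum.factorial : ℚ) := by rw [hDfact]
      _ = (A * N) * (K0 * P) := by rw [hfib, ← hB]
      _ = N * K0 * (A * P) := by ring
  have := mul_right_cancel₀ (mul_ne_zero hAne hPne) hcancel
  exact this
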